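/- arXiv:2105.01770 — 3 statements merged into one kernel-verified Lean document; each statement's English description precedes it below -/
import Mathlib

section
/- Let (M, C) be a duality pair over a ring R. Then the class M is closed under pure submodules and pure quotients: if 0 → A → B → C → 0 is a pure short exact sequence of R-modules with B ∈ M, then A ∈ M and C ∈ M. -/
open CategoryTheory MulOpposite

noncomputable section

/-- The character group `M⁺ = Hom_ℤ(M, ℚ/ℤ)`. -/
abbrev CharMod (M : Type) [AddCommGroup M] : Type := M →+ AddCircle (1 : ℚ)

/-- If `M` is a left `R`-module, `M⁺` is a right `R`-module (an `Rᵐᵒᵖ`-module). -/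
instance charRight (R : Type) [Ring R] (M : Type) [AddCommGroup M] [Module R M] :
    Module Rᵐᵒᵖ (CharMod M) where
  smul r f := f.comp (DistribMulAction.toAddMonoidHom M r.unop)
  one_smul f := by ext m; show f ((1 : R) • m) = f m; rw [one_smul]
  mul_smul r s f := by
    ext m
    show f ((r * s).unop • m) = f (s.unop • r.unop • m)
    rw [MulOpposite.unop_mul, mul_smul]
  smul_zero r := rfl
  smul_add r f g := rfl
  add_smul r s f := by
    ext m
    show f ((r + s).unop • m) = f (r.unop • m) + f (s.unop • m)
    rw [MulOpposite.unop_add, add_smul, map_add]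
  zero_smul f := by
    ext m
    show f ((0 : R) • m) = 0
    rw [zero_smul, map_zero]

/-- If `M` is a right `R`-module (`Rᵐᵒᵖ`-module), `M⁺` is a left `R`-module. -/
instance charLeft (R : Type) [Ring R] (M : Type) [AddCommGroup M] [Module Rᵐᵒᵖ M] :
    Module R (CharMod M) where
  smul r f := f.comp (DistribMulAction.toAddMonoidHom M (op r))
  one_smul f := by ext m; show f ((op (1:R)) • m) = f m; rw [op_one, one_smul]
  mul_smul r s f := by
    ext m
    show f (op (r * s) • m) = f (op s • op r • m)
    rw [op_mul, mul_smul]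
  smul_zero r := rfl
  smul_add r f g := rfl
  add_smul r s f := by
    ext m
    show f (op (r + s) • m) = f (op r • m) + f (op s • m)
    rw [show (op (r+s) : Rᵐᵒᵖ) = op r + op s from rfl, add_smul, map_add]
  zero_smul f := by
    ext m
    show f (op (0 : R) • m) = 0
    rw [op_zero, zero_smul, map_zero]

variable (R : Type) [Ring R]

@[simp] lemma charRight_smul_apply {M : Type} [AddCommGroup M] [Module R M]
    (r : Rᵐᵒᵖ) (f : CharMod M) (m : M) : (r • f) m = f (r.unop • m) := rfl

@[simp] lemma charLeft_smul_apply {M : Type} [AddCommGroup M] [Module Rᵐᵒᵖ M]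
    (r : R) (f : CharMod M) (m : M) : (r • f) m = f (op r • m) := rfl

/-- The contravariant dual (character) map on a map of left `R`-modules. -/
def charDual {M N : Type} [AddCommGroup M] [AddCommGroup N] [Module R M] [Module R N]
    (f : M →ₗ[R] N) : CharMod N →ₗ[Rᵐᵒᵖ] CharMod M where
  toFun c := c.comp f.toAddMonoidHom
  map_add' c c' := rfl
  map_smul' r c := by
    ext m
    show c (r.unop • f m) = c (f (r.unop • m))
    rw [f.map_smul]

/-- The contravariant dual (character) map on a map of right `R`-modules. -/
def charDual' {M N : Type} [AddCommGroup M] [AddCommGroup N] [Module Rᵐᵒᵖ M] [Module Rᵐᵒᵖ N]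
    (f : M →ₗ[Rᵐᵒᵖ] N) : CharMod N →ₗ[R] CharMod M where
  toFun c := c.comp f.toAddMonoidHom
  map_add' c c' := rfl
  map_smul' r c := by
    ext m
    show c (op r • f m) = c (f (op r • m))
    rw [f.map_smul]

end
open CategoryTheory CategoryTheory.Limits MulOpposite

noncomputable section

variable (R : Type) [Ring R]

/-- The character module `M⁺` of a left `R`-module, as a right `R`-module. -/
def charObj (M : ModuleCat.{0} R) : ModuleCat.{0} Rᵐᵒᵖ :=
  ModuleCat.of Rᵐᵒᵖ (CharMod M)

/-- The character module `A⁺` of a right `R`-module, as a left `R`-module. -/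
def charObj' (A : ModuleCat.{0} Rᵐᵒᵖ) : ModuleCat.{0} R :=
  ModuleCat.of R (CharMod A)

/-- The dual map `N⁺ ⟶ M⁺` of a map `M ⟶ N` of left `R`-modules. -/
def charMap {M N : ModuleCat.{0} R} (f : M ⟶ N) : charObj R N ⟶ charObj R M :=
  ModuleCat.ofHom (charDual R f.hom)

/-- `0 → X → Y → Z → 0` is a short exact sequence. -/
def IsShortExact {X Y Z : ModuleCat.{0} R} (i : X ⟶ Y) (p : Y ⟶ Z) : Prop :=
  ∃ w : i ≫ p = 0, (ShortComplex.mk i p w).ShortExact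

/-- A short exact sequence `0 → A → B → C → 0` of `R`-modules is pure if the dual
sequence `0 → C⁺ → B⁺ → A⁺ → 0` of character modules is split. -/
def IsPureSES {A B C : ModuleCat.{0} R} (i : A ⟶ B) (p : B ⟶ C) : Prop :=
  IsShortExact R i p ∧
    ∃ ρ : charObj R B ⟶ charObj R C, charMap R p ≫ ρ = 𝟙 (charObj R C)

/-- A duality pair over `R`: a class `𝓜` of `R`-modules and a class `𝓒` of `R°`-modules
such that `M ∈ 𝓜` iff `M⁺ ∈ 𝓒`, and `𝓒` is closed under direct summands and finite
direct sums (both classes being closed under isomorphism). -/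
structure IsDualityPair (𝓜 : Set (ModuleCat.{0} R)) (𝓒 : Set (ModuleCat.{0} Rᵐᵒᵖ)) :
    Prop where
  mem_iff : ∀ M : ModuleCat.{0} R, M ∈ 𝓜 ↔ charObj R M ∈ 𝓒
  isoClosed_left : ∀ {M N : ModuleCat.{0} R}, (M ≅ N) → M ∈ 𝓜 → N ∈ 𝓜
  isoClosed_right : ∀ {M N : ModuleCat.{0} Rᵐᵒᵖ}, (M ≅ N) → M ∈ 𝓒 → N ∈ 𝓒
  summand_closed : ∀ {M N : ModuleCat.{0} Rᵐᵒᵖ} (s : M ⟶ N) (r : N ⟶ M),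
    s ≫ r = 𝟙 M → N ∈ 𝓒 → M ∈ 𝓒
  biprod_closed : ∀ {M N : ModuleCat.{0} Rᵐᵒᵖ}, M ∈ 𝓒 → N ∈ 𝓒 → (M ⊞ N) ∈ 𝓒

/-- A duality pair over `R°`: a class `𝓒` of `R°`-modules and a class `𝓜` of `R`-modules
such that `A ∈ 𝓒` iff `A⁺ ∈ 𝓜`, and `𝓜` is closed under direct summands and finite
direct sums. -/
structure IsCoDualityPair (𝓒 : Set (ModuleCat.{0} Rᵐᵒᵖ)) (𝓜 : Set (ModuleCat.{0} R)) :
    Prop where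
  mem_iff : ∀ A : ModuleCat.{0} Rᵐᵒᵖ, A ∈ 𝓒 ↔ charObj' R A ∈ 𝓜
  isoClosed_left : ∀ {M N : ModuleCat.{0} Rᵐᵒᵖ}, (M ≅ N) → M ∈ 𝓒 → N ∈ 𝓒
  isoClosed_right : ∀ {M N : ModuleCat.{0} R}, (M ≅ N) → M ∈ 𝓜 → N ∈ 𝓜
  summand_closed : ∀ {M N : ModuleCat.{0} R} (s : M ⟶ N) (r : N ⟶ M),
    s ≫ r = 𝟙 M → N ∈ 𝓜 → M ∈ 𝓜
  biprod_closed : ∀ {M N : ModuleCat.{0} R}, M ∈ 𝓜 → N ∈ 𝓜 → (M ⊞ N) ∈ 𝓜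

/-- A semi-complete duality pair `(𝓛, 𝓐)`: a symmetric duality pair (both `(𝓛, 𝓐)` and
`(𝓐, 𝓛)` are duality pairs) such that `R ∈ 𝓛` and `𝓛` is closed under coproducts. -/
structure IsSemiCompleteDualityPair (𝓛 : Set (ModuleCat.{0} R))
    (𝓐 : Set (ModuleCat.{0} Rᵐᵒᵖ)) : Prop where
  pair : IsDualityPair R 𝓛 𝓐
  pair' : IsCoDualityPair R 𝓐 𝓛
  self_mem : ModuleCat.of R R ∈ 𝓛
  coprod_closed : ∀ {ι : Type} (f : ι → ModuleCat.{0} R), (∀ i, f i ∈ 𝓛) → (∐ f) ∈ 𝓛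

end
open CategoryTheory
noncomputable section

open CategoryTheory.Limits in
/-- The dual short complex of a short exact sequence of `R`-modules is short exact. -/
lemma charShortComplex_shortExact (R : Type) [Ring R]
    {A B C : ModuleCat.{0} R} (i : A ⟶ B) (p : B ⟶ C)
    (hse : IsShortExact R i p) :
    ∃ w : charMap R p ≫ charMap R i = 0,
      (ShortComplex.mk (charMap R p) (charMap R i) w).ShortExact := by
  obtain ⟨w, hS⟩ := hse
  have hi : Function.Injective i := (ModuleCat.mono_iff_injective i).mp hS.mono_f
  have hp : Function.Surjective p := (ModuleCat.epi_iff_surjective p).mp hS.epi_g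
  have hex : ∀ x : B, p x = 0 → ∃ y : A, i y = x :=
    (ShortComplex.moduleCat_exact_iff _).mp hS.exact
  have hip : ∀ b : A, p (i b) = 0 := fun b => by
    have := LinearMap.congr_fun (congrArg ModuleCat.Hom.hom w) b
    simpa using this
  have w' : charMap R p ≫ charMap R i = 0 := by
    refine ModuleCat.hom_ext (LinearMap.ext fun c => ?_)
    change CharMod C at c
    refine AddMonoidHom.ext fun b => ?_
    show c (p (i b)) = 0
    rw [hip, map_zero]
  refine ⟨w', ?_⟩
  apply ShortComplex.ShortExact.mk'
  · -- exactness at B⁺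
    rw [ShortComplex.moduleCat_exact_iff]
    intro c hc
    change CharMod B at c
    have hc' : (c.comp i.hom.toAddMonoidHom : CharMod A) = 0 := hc
    have hci : ∀ a : A, c (i a) = 0 := fun a => DFunLike.congr_fun hc' a
    have hker : ∀ b : B, p b = 0 → c b = 0 := by
      intro b hb
      obtain ⟨a, ha⟩ := hex b hb
      rw [← ha]; exact hci a
    have hcongr : ∀ b b' : B, p b = p b' → c b = c b' := by
      intro b b' hbb
      have : c (b - b') = 0 := hker _ (by rw [map_sub, hbb, sub_self])
      rw [map_sub, sub_eq_zero] at this; exact this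
    set s := Function.surjInv hp with hs
    have hps : ∀ x : C, p (s x) = x := Function.surjInv_eq hp
    refine ⟨{ toFun := fun x => c (s x),
              map_zero' := ?_, map_add' := ?_ }, ?_⟩
    · show c (s 0) = 0
      have : c (s 0) = c 0 := hcongr _ _ (by rw [hps, map_zero])
      rw [this, map_zero]
    · intro x y
      show c (s (x + y)) = c (s x) + c (s y)
      have : c (s (x + y)) = c (s x + s y) := hcongr _ _ (by rw [hps, map_add, hps, hps])
      rw [this, map_add]
    · refine AddMonoidHom.ext fun b => ?_
      show c (s (p b)) = c b
      exact hcongr _ _ (hps (p b))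
  · -- charMap p is mono
    rw [ModuleCat.mono_iff_injective]
    intro c c' hcc
    change CharMod C at c c'
    have hcc' : (c.comp p.hom.toAddMonoidHom : CharMod B)
        = c'.comp p.hom.toAddMonoidHom := hcc
    refine AddMonoidHom.ext fun x => ?_
    obtain ⟨b, rfl⟩ := hp x
    exact DFunLike.congr_fun hcc' b
  · -- charMap i is epi
    rw [ModuleCat.epi_iff_surjective]
    intro c
    change CharMod A at c
    obtain ⟨d, hd⟩ := CharacterModule.dual_surjective_of_injective
      (i.hom.toAddMonoidHom.toIntLinearMap) hi (c : CharacterModule A)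
    refine ⟨d, ?_⟩
    refine AddMonoidHom.ext fun a => ?_
    exact DFunLike.congr_fun hd a

/-- if `(𝓜, 𝓒)` is a duality pair, then `𝓜` is closed under pure submodules
and pure quotients. -/
theorem dualityPair_pure_closed (R : Type) [Ring R]
    (𝓜 : Set (ModuleCat.{0} R)) (𝓒 : Set (ModuleCat.{0} Rᵐᵒᵖ))
    (h : IsDualityPair R 𝓜 𝓒)
    (A B C : ModuleCat.{0} R) (i : A ⟶ B) (p : B ⟶ C)
    (hpure : IsPureSES R i p) (hB : B ∈ 𝓜) :
    A ∈ 𝓜 ∧ C ∈ 𝓜 := by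
  obtain ⟨hse, ρ, hρ⟩ := hpure
  obtain ⟨w, hS⟩ := charShortComplex_shortExact R i p hse
  have hBdual : charObj R B ∈ 𝓒 := (h.mem_iff B).mp hB
  -- the dual short complex splits using the retraction ρ
  have splitting := ShortComplex.Splitting.ofExactOfRetraction
    (ShortComplex.mk (charMap R p) (charMap R i) w) hS.exact ρ hρ hS.epi_g
  constructor
  · -- A⁺ is a direct summand of B⁺ via the section of charMap i
    refine (h.mem_iff A).mpr (h.summand_closed splitting.s (charMap R i) splitting.s_g hBdual)
  · -- C⁺ is a direct summand of B⁺ via ρ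
    exact (h.mem_iff C).mpr (h.summand_closed (charMap R p) ρ hρ hBdual)

end
end

section
/- Let B be a class of R-modules containing all injectives. The class GI_B of Gorenstein B-injective modules is closed under extensions: if 0 → N' → N → N'' → 0 is exact with N', N'' ∈ GI_B, then N ∈ GI_B. -/
open CategoryTheory
/-- A homological complex is acyclic (exact) if it is exact at every degree. -/
def HomologicalComplex.IsAcyclic {C : Type*} [CategoryTheory.Category C]
    [CategoryTheory.Abelian C]
    {ι : Type*} {c : ComplexShape ι} (K : HomologicalComplex C c) : Prop :=
  ∀ i, K.ExactAt i

/-- The contravariant functor `Hom_ℤ(-, ℚ/ℤ)` on abelian groups. -/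
noncomputable abbrev charFunctor : AddCommGrpCatᵒᵖ ⥤ AddCommGrpCat :=
  CategoryTheory.preadditiveYoneda.obj (AddCommGrpCat.of (AddCircle (1 : ℚ)))
open CategoryTheory MulOpposite

noncomputable section

set_option synthInstance.maxHeartbeats 1000000
set_option maxHeartbeats 1000000

variable (R : Type) [Ring R]

instance moduleCatHasDerivedCategory : HasDerivedCategory (ModuleCat.{0} R) :=
  HasDerivedCategory.standard _

instance moduleCatHasExt : HasExt.{1} (ModuleCat.{0} R) :=
  CategoryTheory.hasExt_of_hasDerivedCategory _

/-- `0 → X → Y → Z → 0` is a short exact sequence. -/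
def IsSES {X Y Z : ModuleCat.{0} R} (i : X ⟶ Y) (p : Y ⟶ Z) : Prop :=
  ∃ w : i ≫ p = 0, (ShortComplex.mk i p w).ShortExact

/-- The left `Ext¹`-orthogonal class of a class of modules. -/
def leftOrth (𝓖 : Set (ModuleCat.{0} R)) : Set (ModuleCat.{0} R) :=
  {W | ∀ N ∈ 𝓖, Subsingleton (Abelian.Ext W N 1)}

/-- The right `Ext¹`-orthogonal class of a class of modules. -/
def rightOrth (𝓖 : Set (ModuleCat.{0} R)) : Set (ModuleCat.{0} R) :=
  {V | ∀ N ∈ 𝓖, Subsingleton (Abelian.Ext N V 1)}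

/-- A complex `E` is `Hom(𝓑,-)`-acyclic if `Hom(B, E)` is exact for every `B ∈ 𝓑`. -/
def homFromAcyclic (𝓑 : Set (ModuleCat.{0} R)) {ι : Type*} {c : ComplexShape ι}
    (E : HomologicalComplex (ModuleCat.{0} R) c) : Prop :=
  ∀ B ∈ 𝓑,
    (((preadditiveCoyoneda.obj (Opposite.op B)).mapHomologicalComplex _).obj E).IsAcyclic

/-- `N` is Gorenstein `𝓑`-injective: `N = Z₀E` for some exact `Hom(𝓑,-)`-acyclic complex `E`
of injective modules. -/
def GorensteinBInjective (𝓑 : Set (ModuleCat.{0} R)) (N : ModuleCat.{0} R) : Prop :=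
  ∃ E : ChainComplex (ModuleCat.{0} R) ℤ,
    (∀ n, Injective (E.X n)) ∧ E.IsAcyclic ∧ homFromAcyclic R 𝓑 E ∧
      Nonempty (N ≅ E.cycles 0)

/-- `(𝓧, 𝓨)` is a cotorsion pair: each class is the `Ext¹`-orthogonal of the other. -/
def IsCotorsionPair (𝓧 𝓨 : Set (ModuleCat.{0} R)) : Prop :=
  𝓧 = leftOrth R 𝓨 ∧ 𝓨 = rightOrth R 𝓧

/-- A cotorsion pair is complete if it has enough injectives (special preenvelopes)
and enough projectives (special precovers). -/
def IsCompleteCP (𝓧 𝓨 : Set (ModuleCat.{0} R)) : Prop :=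
  (∀ M : ModuleCat.{0} R, ∃ (Y X : ModuleCat.{0} R) (i : M ⟶ Y) (p : Y ⟶ X),
      Y ∈ 𝓨 ∧ X ∈ 𝓧 ∧ IsSES R i p) ∧
  (∀ M : ModuleCat.{0} R, ∃ (Y X : ModuleCat.{0} R) (i : Y ⟶ X) (p : X ⟶ M),
      Y ∈ 𝓨 ∧ X ∈ 𝓧 ∧ IsSES R i p)

/-- A cotorsion pair is hereditary if `Extⁱ(X, Y) = 0` for all `i ≥ 1`. -/
def IsHereditaryCP (𝓧 𝓨 : Set (ModuleCat.{0} R)) : Prop :=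
  ∀ X ∈ 𝓧, ∀ Y ∈ 𝓨, ∀ i : ℕ, 1 ≤ i → Subsingleton (Abelian.Ext X Y i)

end
open CategoryTheory
noncomputable section

noncomputable section
set_option maxHeartbeats 1000000
set_option synthInstance.maxHeartbeats 400000

variable {R : Type} [Ring R]

lemma mext {A B : ModuleCat.{0} R} {f g : A ⟶ B} (h : ∀ a, f a = g a) : f = g :=
  ModuleCat.hom_ext (LinearMap.ext h)

lemma capp {A B C' : ModuleCat.{0} R} (f : A ⟶ B) (g : B ⟶ C') (a : A) :
    (f ≫ g) a = g (f a) := rfl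

lemma napp {A B : ModuleCat.{0} R} (f : A ⟶ B) (a : A) : (-f) a = -(f a) := rfl

lemma zapp {A B : ModuleCat.{0} R} (a : A) : (0 : A ⟶ B) a = 0 := rfl

lemma dd_apply {K : ChainComplex (ModuleCat.{0} R) ℤ} (i j k : ℤ) (x : K.X i) :
    K.d j k (K.d i j x) = 0 := by
  rw [← capp, K.d_comp_d, zapp]

lemma acyclic_elem {K : ChainComplex (ModuleCat.{0} R) ℤ}
    (hK : K.IsAcyclic) (j : ℤ) (x : K.X j) (hx : K.d j (j-1) x = 0) :
    ∃ y : K.X (j+1), K.d (j+1) j y = x := by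
  have h := (K.exactAt_iff' (j+1) j (j-1) (by simp [ChainComplex.prev])
    (by simp [ChainComplex.next])).1 (hK j)
  rw [ShortComplex.moduleCat_exact_iff] at h
  exact h x hx

lemma homAcyclic_elem {K : ChainComplex (ModuleCat.{0} R) ℤ} {B : ModuleCat.{0} R}
    (hK : (((preadditiveCoyoneda.obj (Opposite.op B)).mapHomologicalComplex _).obj K).IsAcyclic)
    (j : ℤ) (φ : B ⟶ K.X j) (hφ : φ ≫ K.d j (j-1) = 0) :
    ∃ ψ : B ⟶ K.X (j+1), ψ ≫ K.d (j+1) j = φ := by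
  have h := ((((preadditiveCoyoneda.obj (Opposite.op B)).mapHomologicalComplex _).obj
      K).exactAt_iff' (j+1) j (j-1) (by simp [ChainComplex.prev])
    (by simp [ChainComplex.next])).1 (hK j)
  rw [ShortComplex.ab_exact_iff] at h
  exact h φ hφ

lemma cycles_incl {K : ChainComplex (ModuleCat.{0} R) ℤ} {M : ModuleCat.{0} R}
    (e : M ≅ K.cycles 0) :
    ∃ ι : M ⟶ K.X 0, Function.Injective ι ∧ (ι ≫ K.d 0 (-1) = 0) ∧
      ∀ x : K.X 0, K.d 0 (-1) x = 0 → ∃ m, ι m = x := by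
  refine ⟨e.hom ≫ K.iCycles 0, ?_, ?_, ?_⟩
  · rw [← ModuleCat.mono_iff_injective]
    infer_instance
  · simp [HomologicalComplex.iCycles_d]
  · intro x hx
    have hnext : (ComplexShape.down ℤ).next 0 = -1 := by simp [ChainComplex.next]
    have hzero : (ModuleCat.ofHom (LinearMap.toSpanSingleton R (K.X 0) x)) ≫ K.d 0 (-1) = 0 := by
      apply mext; intro r
      show K.d 0 (-1) (r • x) = 0
      rw [map_smul, hx, smul_zero]
    refine ⟨e.inv ((K.liftCycles (ModuleCat.ofHom (LinearMap.toSpanSingleton R (K.X 0) x))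
      (-1) hnext hzero) (1 : R)), ?_⟩
    have h1 := congrArg (fun (g : ModuleCat.of R R ⟶ K.X 0) => g (1:R))
      (K.liftCycles_i (ModuleCat.ofHom (LinearMap.toSpanSingleton R (K.X 0) x)) (-1) hnext hzero)
    have hei : ∀ z, e.hom (e.inv z) = z := fun z => by
      show (e.inv ≫ e.hom) z = z
      rw [e.inv_hom_id]; rfl
    show (e.hom ≫ K.iCycles 0) (e.inv _) = x
    rw [capp, hei]
    rw [← capp, K.liftCycles_i]
    exact LinearMap.toSpanSingleton_apply_one R _ x


def PG (E' E'' : ChainComplex (ModuleCat.{0} R) ℤ) (m : ℤ)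
    (φ : E''.X (m+1) ⟶ E'.X m) : Prop :=
  ∀ y : E''.X (m+1), E''.d (m+1) m y = 0 → E'.d m (m-1) (φ y) = 0

lemma stepUp {E' E'' : ChainComplex (ModuleCat.{0} R) ℤ}
    (hlift' : ∀ (j : ℤ) (B : ModuleCat.{0} R), Injective B → ∀ φ : B ⟶ E'.X j,
       φ ≫ E'.d j (j-1) = 0 → ∃ ψ : B ⟶ E'.X (j+1), ψ ≫ E'.d (j+1) j = φ)
    (hinj'' : ∀ n, Injective (E''.X n))
    (m : ℤ) (φ : E''.X (m+1) ⟶ E'.X m) (hφ : PG E' E'' m φ) :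
    ∃ ψ : E''.X (m+1+1) ⟶ E'.X (m+1), PG E' E'' (m+1) ψ ∧
      ψ ≫ E'.d (m+1) m = -(E''.d (m+1+1) (m+1) ≫ φ) := by
  have hcond : (-(E''.d (m+1+1) (m+1) ≫ φ)) ≫ E'.d m (m-1) = 0 := by
    apply mext; intro y
    rw [capp, napp, capp, map_neg, hφ _ (dd_apply _ _ _ y), neg_zero, zapp]
  obtain ⟨ψ, hψ⟩ := hlift' m (E''.X (m+1+1)) (hinj'' _) _ hcond
  refine ⟨ψ, ?_, hψ⟩
  intro y hy
  rw [show m+1-1 = m by omega]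
  have h := congrArg (fun (g : E''.X (m+1+1) ⟶ E'.X m) => g y) hψ
  simp only [capp, napp] at h
  rw [h, hy, map_zero, neg_zero]

lemma stepDown {E' E'' : ChainComplex (ModuleCat.{0} R) ℤ}
    (hinj' : ∀ n, Injective (E'.X n))
    (hex'' : ∀ (j : ℤ) (x : E''.X j), E''.d j (j-1) x = 0 → ∃ y, E''.d (j+1) j y = x)
    (m : ℤ) (ψ : E''.X (m+1+1) ⟶ E'.X (m+1)) (hψ : PG E' E'' (m+1) ψ) :
    ∃ φ : E''.X (m+1) ⟶ E'.X m, PG E' E'' m φ ∧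
      ψ ≫ E'.d (m+1) m = -(E''.d (m+1+1) (m+1) ≫ φ) := by
  let d2 : (↥(E''.X (m+1+1)) →ₗ[R] ↥(E''.X (m+1))) := (E''.d (m+1+1) (m+1)).hom
  let β : (↥(E''.X (m+1+1)) →ₗ[R] ↥(E'.X m)) := -(ψ ≫ E'.d (m+1) m : _ ⟶ _).hom
  have hβ : ∀ z, β z = -(E'.d (m+1) m (ψ z)) := fun z => rfl
  have hker : LinearMap.ker d2 ≤ LinearMap.ker β := by
    intro y hy
    rw [LinearMap.mem_ker] at hy ⊢
    have h2 := hψ y hy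
    rw [show m+1-1 = m by omega] at h2
    rw [hβ, h2, neg_zero]
  let αq : (↥(E''.X (m+1+1)) ⧸ LinearMap.ker d2) →ₗ[R] ↥(E'.X m) :=
    Submodule.liftQ (LinearMap.ker d2) β hker
  let eΦ := LinearMap.quotKerEquivRange d2
  let αS : ↥(LinearMap.range d2) →ₗ[R] ↥(E'.X m) := αq ∘ₗ (eΦ.symm : _ →ₗ[R] _)
  let ι : ModuleCat.of R ↥(LinearMap.range d2) ⟶ E''.X (m+1) :=
    ModuleCat.ofHom (LinearMap.range d2).subtype
  haveI : Mono ι := by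
    rw [ModuleCat.mono_iff_injective]
    exact Subtype.val_injective
  haveI := hinj' m
  let φ : E''.X (m+1) ⟶ E'.X m :=
    Injective.factorThru (ModuleCat.ofHom αS : ModuleCat.of R ↥(LinearMap.range d2) ⟶ E'.X m) ι
  have hfac : ι ≫ φ = ModuleCat.ofHom αS := Injective.comp_factorThru _ _
  have key : ∀ z : ↥(E''.X (m+1+1)), φ (d2 z) = β z := by
    intro z
    have hmem : d2 z ∈ LinearMap.range d2 := ⟨z, rfl⟩
    have h1 := congrArg (fun (g : ModuleCat.of R ↥(LinearMap.range d2) ⟶ E'.X m)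
      => g ⟨d2 z, hmem⟩) hfac
    change φ (ι ⟨d2 z, hmem⟩) = _ at h1
    have h2 : ι (⟨d2 z, hmem⟩ : ↥(LinearMap.range d2)) = d2 z := rfl
    rw [h2] at h1
    rw [h1]
    show αq (eΦ.symm ⟨d2 z, hmem⟩) = β z
    have h3 : eΦ.symm ⟨d2 z, hmem⟩ = (LinearMap.ker d2).mkQ z :=
      LinearMap.quotKerEquivRange_symm_apply_image d2 z hmem
    rw [h3]
    exact Submodule.liftQ_apply (LinearMap.ker d2) β z
  have keyd : ∀ z : ↥(E''.X (m+1+1)), φ (E''.d (m+1+1) (m+1) z) = -(E'.d (m+1) m (ψ z)) :=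
    fun z => (key z).trans (hβ z)
  refine ⟨φ, ?_, ?_⟩
  · intro y hy
    have hy' : E''.d (m+1) (m+1-1) y = 0 := by
      rw [show m+1-1 = m by omega]; exact hy
    obtain ⟨z, hz⟩ := hex'' (m+1) y hy'
    rw [← hz, keyd z, map_neg, dd_apply, neg_zero]
  · apply mext; intro z
    rw [capp, napp, capp, keyd z, neg_neg]
lemma buildF (E' E'' : ChainComplex (ModuleCat.{0} R) ℤ)
    (f₀ : E''.X (Int.negSucc 0 + 1) ⟶ E'.X (Int.negSucc 0)) (hf₀ : PG E' E'' (Int.negSucc 0) f₀)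
    (hup : ∀ (m : ℤ) (φ : E''.X (m+1) ⟶ E'.X m), PG E' E'' m φ →
      ∃ ψ : E''.X (m+1+1) ⟶ E'.X (m+1), PG E' E'' (m+1) ψ ∧
        ψ ≫ E'.d (m+1) m = -(E''.d (m+1+1) (m+1) ≫ φ))
    (hdown : ∀ (m : ℤ) (ψ : E''.X (m+1+1) ⟶ E'.X (m+1)), PG E' E'' (m+1) ψ →
      ∃ φ : E''.X (m+1) ⟶ E'.X m, PG E' E'' m φ ∧
        ψ ≫ E'.d (m+1) m = -(E''.d (m+1+1) (m+1) ≫ φ)) :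
    ∃ F : ∀ n : ℤ, (E''.X (n+1) ⟶ E'.X n),
      F (Int.negSucc 0) = f₀ ∧ (∀ n, PG E' E'' n (F n)) ∧
      ∀ n : ℤ, F (n+1) ≫ E'.d (n+1) n = -(E''.d (n+1+1) (n+1) ≫ F n) := by
  choose upf hup1 hup2 using hup
  choose downf hdown1 hdown2 using hdown
  let up : ∀ k : ℕ, {φ : E''.X (Int.ofNat k + 1) ⟶ E'.X (Int.ofNat k) //
      PG E' E'' (Int.ofNat k) φ} :=
    fun k => Nat.rec ⟨upf (Int.negSucc 0) f₀ hf₀, hup1 (Int.negSucc 0) f₀ hf₀⟩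
      (fun k ih => ⟨upf (Int.ofNat k) ih.1 ih.2, hup1 (Int.ofNat k) ih.1 ih.2⟩) k
  let down : ∀ k : ℕ, {φ : E''.X (Int.negSucc k + 1) ⟶ E'.X (Int.negSucc k) //
      PG E' E'' (Int.negSucc k) φ} :=
    fun k => Nat.rec ⟨f₀, hf₀⟩
      (fun k ih => ⟨downf (Int.negSucc (k+1)) ih.1 ih.2, hdown1 (Int.negSucc (k+1)) ih.1 ih.2⟩) k
  refine ⟨fun n => Int.rec (fun k => (up k).1) (fun k => (down k).1) n, rfl, ?_, ?_⟩
  · intro n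
    cases n with
    | ofNat k => exact (up k).2
    | negSucc k => exact (down k).2
  · intro n
    cases n with
    | ofNat k => exact hup2 (Int.ofNat k) (up k).1 (up k).2
    | negSucc k =>
      cases k with
      | zero => exact hup2 (Int.negSucc 0) f₀ hf₀
      | succ k => exact hdown2 (Int.negSucc (k+1)) (down k).1 (down k).2
section TC
variable (E' E'' : ChainComplex (ModuleCat.{0} R) ℤ)
  (F : ∀ n : ℤ, (E''.X (n+1) ⟶ E'.X n))

def DD (j : ℤ) : ModuleCat.of R (↥(E'.X (j+1)) × ↥(E''.X (j+1))) ⟶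
    ModuleCat.of R (↥(E'.X j) × ↥(E''.X j)) :=
  ModuleCat.ofHom (LinearMap.prod
    (((E'.d (j+1) j).hom.comp (LinearMap.fst R _ _)) +
      ((F j).hom.comp (LinearMap.snd R _ _)))
    ((E''.d (j+1) j).hom.comp (LinearMap.snd R _ _)))

lemma DD_apply (j : ℤ) (v : ↥(E'.X (j+1)) × ↥(E''.X (j+1))) :
    DD E' E'' F j v = (E'.d (j+1) j v.1 + F j v.2, E''.d (j+1) j v.2) := rfl

variable (hF : ∀ n : ℤ, F (n+1) ≫ E'.d (n+1) n = -(E''.d (n+1+1) (n+1) ≫ F n))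

lemma hF_apply (hF : ∀ n : ℤ, F (n+1) ≫ E'.d (n+1) n = -(E''.d (n+1+1) (n+1) ≫ F n)) (n : ℤ) (y : E''.X (n+1+1)) :
    E'.d (n+1) n (F (n+1) y) = -(F n (E''.d (n+1+1) (n+1) y)) := by
  have h := congrArg (fun (g : E''.X (n+1+1) ⟶ E'.X n) => g y) (hF n)
  simpa only [capp, napp] using h

def GTC (hF : ∀ n : ℤ, F (n+1) ≫ E'.d (n+1) n = -(E''.d (n+1+1) (n+1) ≫ F n)) :
    ChainComplex (ModuleCat.{0} R) ℤ where
  X n := ModuleCat.of R (↥(E'.X n) × ↥(E''.X n))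
  d i j := if h : j + 1 = i then
      (eqToHom (congrArg (fun t => ModuleCat.of R (↥(E'.X t) × ↥(E''.X t))) h.symm)) ≫
        DD E' E'' F j
    else 0
  shape i j hn := dif_neg hn
  d_comp_d' i j k hij hjk := by
    simp only [ComplexShape.down_Rel] at hij hjk
    subst hij; subst hjk
    beta_reduce
    rw [dif_pos rfl, dif_pos rfl]
    simp only [eqToHom_refl, Category.id_comp]
    apply mext; intro v
    rw [capp]
    apply Prod.ext
    · show E'.d (k+1) k (E'.d (k+1+1) (k+1) v.1 + F (k+1) v.2) + F k (E''.d (k+1+1) (k+1) v.2) = 0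
      rw [map_add, dd_apply, hF_apply E' E'' F hF k v.2]
      simp
    · show E''.d (k+1) k (E''.d (k+1+1) (k+1) v.2) = 0
      exact dd_apply _ _ _ _
  
lemma GTC_d (j : ℤ) : (GTC E' E'' F hF).d (j+1) j = DD E' E'' F j := by
  show (if h : j + 1 = j + 1 then _ else 0) = _
  simp; rfl

lemma GTC_injective (hinj' : ∀ n, Injective (E'.X n)) (hinj'' : ∀ n, Injective (E''.X n))
    (n : ℤ) : Injective ((GTC E' E'' F hF).X n) := by
  constructor
  intro A B g f hf
  haveI := hinj' n; haveI := hinj'' n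
  let g1 : A ⟶ E'.X n := g ≫ ModuleCat.ofHom (LinearMap.fst R ↥(E'.X n) ↥(E''.X n))
  let g2 : A ⟶ E''.X n := g ≫ ModuleCat.ofHom (LinearMap.snd R ↥(E'.X n) ↥(E''.X n))
  refine ⟨ModuleCat.ofHom (LinearMap.prod
    (Injective.factorThru g1 f).hom (Injective.factorThru g2 f).hom), ?_⟩
  apply mext; intro a
  erw [capp]
  apply Prod.ext
  · show Injective.factorThru g1 f (f a) = (g a).1
    rw [← capp, Injective.comp_factorThru]; rfl
  · show Injective.factorThru g2 f (f a) = (g a).2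
    rw [← capp, Injective.comp_factorThru]; rfl

lemma GTC_acyclic (hex' : ∀ (j : ℤ) (x : E'.X j), E'.d j (j-1) x = 0 → ∃ y, E'.d (j+1) j y = x)
    (hex'' : ∀ (j : ℤ) (x : E''.X j), E''.d j (j-1) x = 0 → ∃ y, E''.d (j+1) j y = x) :
    (GTC E' E'' F hF).IsAcyclic := by
  intro i
  obtain ⟨j, rfl⟩ : ∃ j, i = j + 1 := ⟨i - 1, by omega⟩
  rw [HomologicalComplex.exactAt_iff' _ (j+1+1) (j+1) j
    (by simp [ChainComplex.prev]) (by rw [ChainComplex.next]; omega)]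
  rw [ShortComplex.moduleCat_exact_iff]
  intro v hv
  simp only [HomologicalComplex.shortComplexFunctor'_obj_g,
    HomologicalComplex.shortComplexFunctor'_obj_f, GTC_d] at hv ⊢
  have h1 : E'.d (j+1) j v.1 + F j v.2 = 0 := congrArg Prod.fst hv
  have h2 : E''.d (j+1) j v.2 = 0 := congrArg Prod.snd hv
  have h2' : E''.d (j+1) (j+1-1) v.2 = 0 := by
    rw [show j+1-1 = j by omega]; exact h2
  obtain ⟨z, hz⟩ := hex'' (j+1) v.2 h2'
  have h3 : E'.d (j+1) (j+1-1) (v.1 - F (j+1) z) = 0 := by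
    rw [show j+1-1 = j by omega]
    rw [map_sub, hF_apply E' E'' F hF j z, hz]
    rw [eq_neg_of_add_eq_zero_left h1]
    simp
  obtain ⟨x1, hx1⟩ := hex' (j+1) (v.1 - F (j+1) z) h3
  refine ⟨(x1, z), ?_⟩
  apply Prod.ext
  · show E'.d (j+1+1) (j+1) x1 + F (j+1) z = v.1
    rw [hx1]; abel
  · show E''.d (j+1+1) (j+1) z = v.2
    exact hz

lemma pcmap_app {B X Y : ModuleCat.{0} R} (f : X ⟶ Y) (φ : B ⟶ X) :
    ((preadditiveCoyoneda.obj (Opposite.op B)).map f) φ = φ ≫ f := rfl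

lemma sapp {A B : ModuleCat.{0} R} (f g : A ⟶ B) (a : A) : (f - g) a = f a - g a := rfl

lemma GTC_homFrom (B : ModuleCat.{0} R)
    (hhom' : (((preadditiveCoyoneda.obj (Opposite.op B)).mapHomologicalComplex
      (ComplexShape.down ℤ)).obj E').IsAcyclic)
    (hhom'' : (((preadditiveCoyoneda.obj (Opposite.op B)).mapHomologicalComplex
      (ComplexShape.down ℤ)).obj E'').IsAcyclic) :
    (((preadditiveCoyoneda.obj (Opposite.op B)).mapHomologicalComplex
      (ComplexShape.down ℤ)).obj (GTC E' E'' F hF)).IsAcyclic := by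
  intro n
  obtain ⟨j, rfl⟩ : ∃ j, n = j + 1 := ⟨n - 1, by omega⟩
  rw [HomologicalComplex.exactAt_iff' _ (j+1+1) (j+1) j
    (by simp [ChainComplex.prev]) (by rw [ChainComplex.next]; omega)]
  rw [ShortComplex.ab_exact_iff]
  intro φ hφ
  simp only [HomologicalComplex.shortComplexFunctor'_obj_g,
    HomologicalComplex.shortComplexFunctor'_obj_f,
    Functor.mapHomologicalComplex_obj_d] at hφ ⊢
  let φh : B ⟶ (GTC E' E'' F hF).X (j+1) := φ
  have hφc : φh ≫ (GTC E' E'' F hF).d (j+1) j = 0 := hφ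
  let φ1 : B ⟶ E'.X (j+1) := φh ≫ ModuleCat.ofHom (LinearMap.fst R ↥(E'.X (j+1)) ↥(E''.X (j+1)))
  let φ2 : B ⟶ E''.X (j+1) := φh ≫ ModuleCat.ofHom (LinearMap.snd R ↥(E'.X (j+1)) ↥(E''.X (j+1)))
  have hcomp : ∀ b, (GTC E' E'' F hF).d (j+1) j (φh b) = 0 := by
    intro b
    have := congrArg (fun (g : B ⟶ (GTC E' E'' F hF).X j) => g b) hφc
    simpa only [capp, zapp] using this
  have h1 : ∀ b, E'.d (j+1) j ((φh b).1) + F j ((φh b).2) = 0 := by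
    intro b
    have h := hcomp b
    rw [GTC_d] at h
    exact congrArg Prod.fst h
  have h2 : ∀ b, E''.d (j+1) j ((φh b).2) = 0 := by
    intro b
    have h := hcomp b
    rw [GTC_d] at h
    exact congrArg Prod.snd h
  have hφ2 : φ2 ≫ E''.d (j+1) (j+1-1) = 0 := by
    rw [show j+1-1 = j by omega]
    apply mext; intro b
    rw [capp, zapp]
    exact h2 b
  obtain ⟨ψ2, hψ2⟩ := homAcyclic_elem hhom'' (j+1) φ2 hφ2
  have hψ2' : ∀ b, E''.d (j+1+1) (j+1) (ψ2 b) = (φh b).2 := by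
    intro b
    have := congrArg (fun (g : B ⟶ E''.X (j+1)) => g b) hψ2
    exact this
  have hμ : (φ1 - ψ2 ≫ F (j+1)) ≫ E'.d (j+1) (j+1-1) = 0 := by
    rw [show j+1-1 = j by omega]
    apply mext; intro b
    rw [capp, sapp, zapp, map_sub, capp]
    rw [hF_apply E' E'' F hF j (ψ2 b), hψ2' b]
    have := h1 b
    show E'.d (j+1) j (φ1 b) - -(F j ((φh b).2)) = 0
    have hφ1b : φ1 b = (φh b).1 := rfl
    rw [hφ1b, sub_neg_eq_add, this]
  obtain ⟨ψ1, hψ1⟩ := homAcyclic_elem hhom' (j+1) (φ1 - ψ2 ≫ F (j+1)) hμ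
  have hψ1' : ∀ b, E'.d (j+1+1) (j+1) (ψ1 b) = (φh b).1 - F (j+1) (ψ2 b) := by
    intro b
    have := congrArg (fun (g : B ⟶ E'.X (j+1)) => g b) hψ1
    simp only [capp, sapp] at this; exact this
  have hfinal : (ModuleCat.ofHom (LinearMap.prod ψ1.hom ψ2.hom)
      : B ⟶ (GTC E' E'' F hF).X (j+1+1)) ≫ (GTC E' E'' F hF).d (j+1+1) (j+1) = φh := by
    apply mext; intro b
    erw [capp]
    have hgd : (GTC E' E'' F hF).d (j+1+1) (j+1) = DD E' E'' F (j+1) := GTC_d E' E'' F hF (j+1)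
    rw [hgd]
    apply Prod.ext
    · show E'.d (j+1+1) (j+1) (ψ1 b) + F (j+1) (ψ2 b) = (φh b).1
      rw [hψ1' b]; abel
    · show E''.d (j+1+1) (j+1) (ψ2 b) = (φh b).2
      exact hψ2' b
  exact ⟨ModuleCat.ofHom (LinearMap.prod ψ1.hom ψ2.hom), hfinal⟩

end TC

def cyclesIsoKerLemma (K : ChainComplex (ModuleCat.{0} R) ℤ) :
    K.cycles 0 ≅ ModuleCat.of R (LinearMap.ker (K.d 0 (-1)).hom) :=
  (K.cyclesIsoSc' 1 0 (-1) (by rw [ChainComplex.prev]; omega) (by rw [ChainComplex.next]; omega))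
    ≪≫ (ShortComplex.cyclesIsoKernel _) ≪≫ ModuleCat.kernelIsoKer _
end

/-- the class of Gorenstein `𝓑`-injective modules is closed under extensions. -/
theorem gorensteinBInjective_closed_extensions (R : Type) [Ring R]
    (𝓑 : Set (ModuleCat.{0} R)) (hB : ∀ I : ModuleCat.{0} R, Injective I → I ∈ 𝓑)
    (N' N N'' : ModuleCat.{0} R) (i : N' ⟶ N) (p : N ⟶ N'') (hses : IsSES R i p)
    (h' : GorensteinBInjective R 𝓑 N') (h'' : GorensteinBInjective R 𝓑 N'') :
    GorensteinBInjective R 𝓑 N := by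
  obtain ⟨w0, hse⟩ := hses
  obtain ⟨E', hinj', hac', hhom', ⟨e'⟩⟩ := h'
  obtain ⟨E'', hinj'', hac'', hhom'', ⟨e''⟩⟩ := h''
  obtain ⟨ι', hι'inj, hι'd, hι'range⟩ := cycles_incl e'
  obtain ⟨ι'', hι''inj, hι''d, hι''range⟩ := cycles_incl e''
  haveI : Mono i := hse.mono_f
  haveI : Epi p := hse.epi_g
  have hpsurj : Function.Surjective p := (ModuleCat.epi_iff_surjective p).1 inferInstance
  have hexNip : ∀ y : ↥N, p y = 0 → ∃ x, i x = y := by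
    have hx := hse.exact
    rw [ShortComplex.moduleCat_exact_iff] at hx
    exact hx
  have hip0 : ∀ x, p (i x) = 0 := fun x => by
    have h := congrArg (fun (g : N' ⟶ N'') => g x) w0
    simpa only [capp, zapp] using h
  haveI := hinj' 0
  haveI := hinj' (-1 : ℤ)
  let u : N ⟶ E'.X 0 := Injective.factorThru ι' i
  have hiu : i ≫ u = ι' := Injective.comp_factorThru ι' i
  have hu : ∀ x, u (i x) = ι' x := fun x => by
    have h := congrArg (fun (g : N' ⟶ E'.X 0) => g x) hiu
    simpa only [capp] using h
  have hcomp0 : i ≫ (u ≫ E'.d 0 (-1)) = 0 := by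
    rw [← Category.assoc, hiu, hι'd]
  obtain ⟨w, hw⟩ := Limits.CokernelCofork.IsColimit.desc' hse.gIsCokernel (u ≫ E'.d 0 (-1)) hcomp0
  have hw' : p ≫ w = u ≫ E'.d 0 (-1) := hw
  have hwp : ∀ x, w (p x) = E'.d 0 (-1) (u x) := fun x => by
    have h := congrArg (fun (g : N ⟶ E'.X (-1)) => g x) hw'
    simpa only [capp] using h
  have hwd : w ≫ E'.d (-1) (-2) = 0 := by
    rw [← cancel_epi p, ← Category.assoc, hw', Category.assoc,
      HomologicalComplex.d_comp_d, Limits.comp_zero, Limits.comp_zero]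
  have hwd' : ∀ y, E'.d (-1) (-2) (w y) = 0 := fun y => by
    have h := congrArg (fun (g : N'' ⟶ E'.X (-2)) => g y) hwd
    simpa only [capp, zapp] using h
  haveI : Mono ι'' := (ModuleCat.mono_iff_injective ι'').2 hι''inj
  let f₀ : E''.X 0 ⟶ E'.X (-1) := Injective.factorThru (-w) ι''
  have hf₀ : ∀ y, f₀ (ι'' y) = -(w y) := fun y => by
    have h := congrArg (fun (g : N'' ⟶ E'.X (-1)) => g y) (Injective.comp_factorThru (-w) ι'')
    simpa only [capp, napp] using h
  have hPG0 : PG E' E'' (Int.negSucc 0) f₀ := by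
    intro y hy
    have hy' : E''.d 0 (-1) y = 0 := hy
    show E'.d (-1) (-2) (f₀ y) = 0
    obtain ⟨m'', hm''⟩ := hι''range y hy'
    rw [← hm'', hf₀ m'', map_neg, hwd' m'', neg_zero]
  have hlift' : ∀ (j : ℤ) (B : ModuleCat.{0} R), Injective B → ∀ φ : B ⟶ E'.X j,
      φ ≫ E'.d j (j-1) = 0 → ∃ ψ : B ⟶ E'.X (j+1), ψ ≫ E'.d (j+1) j = φ :=
    fun j B hBinj φ hφ => homAcyclic_elem (hhom' B (hB B hBinj)) j φ hφ
  have hex' : ∀ (j : ℤ) (x : E'.X j), E'.d j (j-1) x = 0 → ∃ y, E'.d (j+1) j y = x :=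
    fun j x hx => acyclic_elem hac' j x hx
  have hex'' : ∀ (j : ℤ) (x : E''.X j), E''.d j (j-1) x = 0 → ∃ y, E''.d (j+1) j y = x :=
    fun j x hx => acyclic_elem hac'' j x hx
  obtain ⟨F, hFbase, hFPG, hFrel⟩ := buildF E' E'' f₀ hPG0
    (fun m φ h => stepUp hlift' hinj'' m φ h)
    (fun m ψ h => stepDown hinj' hex'' m ψ h)
  refine ⟨GTC E' E'' F hFrel, GTC_injective E' E'' F hFrel hinj' hinj'',
    GTC_acyclic E' E'' F hFrel hex' hex'',
    fun B hBmem => GTC_homFrom E' E'' F hFrel B (hhom' B hBmem) (hhom'' B hBmem), ?_⟩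
  -- the cycles identification
  have hd0 : (GTC E' E'' F hFrel).d 0 (-1) = DD E' E'' F (-1) := GTC_d E' E'' F hFrel (-1)
  have hFb : F (-1) = f₀ := hFbase
  let g0 : ↥N →ₗ[R] ↥(E'.X 0) × ↥(E''.X 0) :=
    LinearMap.prod u.hom (ι''.hom.comp p.hom)
  have hg0mem : ∀ x, g0 x ∈
      LinearMap.ker ((GTC E' E'' F hFrel).d 0 (-1)).hom := by
    intro x
    show (GTC E' E'' F hFrel).d 0 (-1) (g0 x) = 0
    rw [hd0]
    apply Prod.ext
    · show E'.d 0 (-1) (u x) + F (-1) (ι'' (p x)) = 0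
      have h5 : F (-1) (ι'' (p x)) = -(w (p x)) := by rw [hFb]; exact hf₀ (p x)
      rw [h5, hwp x]
      simp
    · show E''.d 0 (-1) (ι'' (p x)) = 0
      have h := congrArg (fun (g : N'' ⟶ E''.X (-1)) => g (p x)) hι''d
      simpa only [capp, zapp] using h
  have hinj0 : ∀ x : ↥N, g0 x = 0 → x = 0 := by
    intro x hx
    have h1 : u x = 0 := congrArg Prod.fst hx
    have h2 : ι'' (p x) = 0 := congrArg Prod.snd hx
    have h3 : p x = 0 := by
      apply hι''inj
      rw [h2, map_zero]
    obtain ⟨x', hx'⟩ := hexNip x h3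
    have h4 : ι' x' = 0 := by rw [← hu x', hx', h1]
    have h5 : x' = 0 := by
      apply hι'inj
      rw [h4, map_zero]
    rw [← hx', h5, map_zero]
  have hinjφ : Function.Injective g0 := by
    intro a b hab
    have h := hinj0 (a - b) (by rw [map_sub, hab, sub_self])
    exact sub_eq_zero.1 h
  have hsurj : ∀ v : ↥(E'.X 0) × ↥(E''.X 0),
      v ∈ LinearMap.ker ((GTC E' E'' F hFrel).d 0 (-1)).hom → ∃ x, g0 x = v := by
    intro v hv
    change (GTC E' E'' F hFrel).d 0 (-1) v = 0 at hv
    have hv' : DD E' E'' F (-1) v = 0 := by rw [← hd0]; exact hv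
    have h1 : E'.d 0 (-1) v.1 + F (-1) v.2 = 0 := congrArg Prod.fst hv'
    have h2 : E''.d 0 (-1) v.2 = 0 := congrArg Prod.snd hv'
    obtain ⟨n2, hn2⟩ := hι''range v.2 h2
    obtain ⟨x0, hx0⟩ := hpsurj n2
    have hr : E'.d 0 (-1) (v.1 - u x0) = 0 := by
      rw [map_sub]
      have hdv : E'.d 0 (-1) v.1 = -(F (-1) v.2) := eq_neg_of_add_eq_zero_left h1
      have h6 : F (-1) (ι'' n2) = -(w n2) := by rw [hFb]; exact hf₀ n2
      rw [hdv, ← hn2, h6, ← hx0, hwp x0]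
      simp
    obtain ⟨m', hm'⟩ := hι'range (v.1 - u x0) hr
    refine ⟨x0 + i m', ?_⟩
    apply Prod.ext
    · show u (x0 + i m') = v.1
      rw [map_add, hu m', hm']
      abel
    · show ι'' (p (x0 + i m')) = v.2
      rw [map_add, hip0 m', add_zero, hx0, hn2]
  let eN : ↥N ≃ₗ[R] ↥(LinearMap.ker ((GTC E' E'' F hFrel).d 0 (-1)).hom) :=
    LinearEquiv.ofBijective (LinearMap.codRestrict (LinearMap.ker ((GTC E' E'' F hFrel).d 0 (-1)).hom)
      (g0 : ↥N →ₗ[R] ↥((GTC E' E'' F hFrel).X 0)) hg0mem)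
      ⟨fun a b hab => hinjφ (congrArg Subtype.val hab),
       fun v => by
        obtain ⟨x, hx⟩ := hsurj v.1 v.2
        exact ⟨x, Subtype.ext hx⟩⟩
  exact ⟨eN.toModuleIso ≪≫ (cyclesIsoKerLemma (GTC E' E'' F hFrel)).symm⟩

end
end

section
/- Let M be an R°-module fitting into a short exact sequence 0 → A → B → M → 0 with A and B FP-injective. If E is an exact complex of injective R°-modules such that Hom(A', E) is exact for every FP-injective A' (i.e., Z₀E is Ding injective), then Hom(M, E) is also exact. -/
open CategoryTheory
open CategoryTheory MulOpposite

open CategoryTheory MulOpposite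
noncomputable section

/-- An `R°`-module is FP-injective (absolutely pure) if `Ext¹(F, A) = 0` for every
finitely presented `F`. -/
def FPInjective (R : Type) [Ring R] (A : ModuleCat.{0} Rᵐᵒᵖ) : Prop :=
  ∀ F : ModuleCat.{0} Rᵐᵒᵖ, Module.FinitePresentation Rᵐᵒᵖ F →
    Subsingleton (Abelian.Ext F A 1)

/-- if `0 → A → B → M → 0` is exact with `A, B` FP-injective, and `E` is an
exact complex of injective `R°`-modules such that `Hom(A', E)` is exact for every
FP-injective `A'`, then `Hom(M, E)` is exact. -/
theorem hom_acyclic_of_extension_of_fpInjective (R : Type) [Ring R]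
    (A B M : ModuleCat.{0} Rᵐᵒᵖ) (i : A ⟶ B) (p : B ⟶ M) (hses : IsSES Rᵐᵒᵖ i p)
    (hA : FPInjective R A) (hB : FPInjective R B)
    (E : ChainComplex (ModuleCat.{0} Rᵐᵒᵖ) ℤ)
    (hinj : ∀ n, Injective (E.X n)) (hexact : E.IsAcyclic)
    (hE : ∀ A' : ModuleCat.{0} Rᵐᵒᵖ, FPInjective R A' →
      (((preadditiveCoyoneda.obj (Opposite.op A')).mapHomologicalComplex _).obj E).IsAcyclic) :
    (((preadditiveCoyoneda.obj (Opposite.op M)).mapHomologicalComplex _).obj E).IsAcyclic := by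
  obtain ⟨w, hse⟩ := hses
  let φ : ((preadditiveCoyoneda.obj (Opposite.op M)).mapHomologicalComplex
      (ComplexShape.down ℤ)).obj E ⟶
      ((preadditiveCoyoneda.obj (Opposite.op B)).mapHomologicalComplex _).obj E :=
    (NatTrans.mapHomologicalComplex (preadditiveCoyoneda.map p.op) _).app E
  let ψ : ((preadditiveCoyoneda.obj (Opposite.op B)).mapHomologicalComplex
      (ComplexShape.down ℤ)).obj E ⟶
      ((preadditiveCoyoneda.obj (Opposite.op A)).mapHomologicalComplex _).obj E :=
    (NatTrans.mapHomologicalComplex (preadditiveCoyoneda.map i.op) _).app E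
  have hzero : φ ≫ ψ = 0 := by
    ext n f
    change M ⟶ E.X n at f
    show i ≫ p ≫ f = 0
    rw [← Category.assoc, w, Limits.zero_comp]
  let T := ShortComplex.mk φ ψ hzero
  have hT : T.ShortExact := by
    apply HomologicalComplex.shortExact_of_degreewise_shortExact
    intro n
    have := hinj n
    have : Limits.PreservesFiniteColimits (preadditiveYoneda.obj (E.X n)) :=
      Limits.comp_preservesFiniteColimits (preadditiveYonedaObj (E.X n))
        (forget₂ _ AddCommGrpCat)
    exact hse.op.map_of_exact (preadditiveYoneda.obj (E.X n))
  have h2 := hE B hB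
  have h3 := hE A hA
  intro n
  rw [HomologicalComplex.exactAt_iff_isZero_homology]
  have hrel : (ComplexShape.down ℤ).Rel (n + 1) n := by simp
  have hex := hT.homology_exact₁ (n + 1) n hrel
  have hz3 : Limits.IsZero (T.X₃.homology (n + 1)) := by
    rw [← HomologicalComplex.exactAt_iff_isZero_homology]
    exact h3 (n + 1)
  have hz2 : Limits.IsZero (T.X₂.homology n) := by
    rw [← HomologicalComplex.exactAt_iff_isZero_homology]
    exact h2 n
  exact hex.isZero_X₂ (hz3.eq_of_src _ _) (hz2.eq_of_tgt _ _)

end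
end
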